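/- Let F be a field and 2 ≤ n ≤ p be integers with p ≥ 3. Let φ : Mat_{n−1,p}(F) → Mat_{1,p}(F) be an affine map such that for every N ∈ Mat_{n−1,p}(F), the n×p matrix obtained by appending the row φ(N) below N has rank less than n. Then there exists Y ∈ F^{n−1} such that φ(N) = Yᵀ N for all N ∈ Mat_{n−1,p}(F). -/

import Mathlib

open Module Submodule Set Function Matrix

section aux1

variable {F V : Type*} [Field F] [AddCommGroup V] [Module F V]

lemma sum_dotProduct' {ι : Type*} (s : Finset ι) {p : ℕ} (f : ι → Fin p → F)
    (z : Fin p → F) : (∑ i ∈ s, f i) ⬝ᵥ z = ∑ i ∈ s, f i ⬝ᵥ z := by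
  simp only [dotProduct, Finset.sum_apply, Finset.sum_mul]
  exact Finset.sum_comm

lemma indep_update {m : ℕ} {v : Fin m → V} (hv : LinearIndependent F v)
    (i k : Fin m) (hik : k ≠ i) :
    LinearIndependent F (Function.update v i (v i + v k)) := by
  classical
  have hs : span F (range (Function.update v i (v i + v k))) = span F (range v) := by
    apply le_antisymm <;> rw [span_le] <;> rintro x ⟨j, rfl⟩
    · by_cases hj : j = i
      · subst hj
        rw [Function.update_self]
        exact add_mem (subset_span ⟨j, rfl⟩) (subset_span ⟨k, rfl⟩)
      · rw [Function.update_of_ne hj]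
        exact subset_span ⟨j, rfl⟩
    · by_cases hj : j = i
      · subst hj
        have h1 : Function.update v j (v j + v k) j
            ∈ span F (range (Function.update v j (v j + v k))) := subset_span ⟨j, rfl⟩
        have h2 : Function.update v j (v j + v k) k
            ∈ span F (range (Function.update v j (v j + v k))) := subset_span ⟨k, rfl⟩
        rw [Function.update_self] at h1
        rw [Function.update_of_ne hik] at h2
        have h3 := sub_mem h1 h2
        simpa using h3
      · exact subset_span ⟨j, Function.update_of_ne hj _ _⟩
  have h2 : Set.finrank F (range (Function.update v i (v i + v k)))
      = Set.finrank F (range v) := by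
    unfold Set.finrank
    rw [hs]
  rw [linearIndependent_iff_card_eq_finrank_span, h2]
  exact linearIndependent_iff_card_eq_finrank_span.mp hv

lemma exists_indep_head [FiniteDimensional F V] :
    ∀ m : ℕ, m + 1 ≤ finrank F V → ∀ w : V, w ≠ 0 →
      ∃ g : Fin (m + 1) → V, LinearIndependent F g ∧ g 0 = w := by
  intro m
  induction m with
  | zero =>
    intro _ w hw
    have h1 : LinearIndependent F (fun _ : Fin 1 => w) := LinearIndependent.of_subsingleton 0 hw
    exact ⟨fun _ => w, h1, rfl⟩
  | succ m ih =>
    intro hle w hw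
    obtain ⟨g, hg, hg0⟩ := ih (by omega) w hw
    obtain ⟨x, hx⟩ := exists_linearIndependent_snoc_of_lt_finrank hg (by omega)
    refine ⟨Fin.snoc g x, hx, ?_⟩
    have h0 : (0 : Fin (m + 2)) = Fin.castSucc (0 : Fin (m + 1)) := by
      ext; simp
    rw [h0, Fin.snoc_castSucc, hg0]

lemma exists_fam [FiniteDimensional F V] {m : ℕ} (hm : 1 ≤ m)
    (hmd : m ≤ finrank F V) (hd2 : 2 ≤ finrank F V) (i : Fin m) (w : V) :
    ∃ v : Fin m → V, LinearIndependent F v ∧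
      LinearIndependent F (Function.update v i (v i + w)) := by
  classical
  by_cases hw : w = 0
  · set B := Module.finBasis F V
    refine ⟨fun k => B (Fin.castLE hmd k),
      B.linearIndependent.comp _ (Fin.castLE_injective _), ?_⟩
    have : Function.update (fun k => B (Fin.castLE hmd k)) i
        ((fun k => B (Fin.castLE hmd k)) i + w) = fun k => B (Fin.castLE hmd k) := by
      rw [hw, add_zero, Function.update_eq_self]
    rw [this]
    exact B.linearIndependent.comp _ (Fin.castLE_injective _)
  · rcases lt_or_ge m 2 with hm2 | hm2
    · -- m = 1
      have hm1 : m = 1 := by omega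
      subst hm1
      have hfr : 1 < finrank F V := by omega
      obtain ⟨y, hy⟩ := exists_linearIndependent_pair_of_one_lt_finrank hfr hw
      have hy0 : y ≠ 0 := hy.ne_zero 1
      have hyw : y + w ≠ 0 := by
        intro h
        have := Fintype.linearIndependent_iff.mp hy ![1, 1] (by
          simp [Fin.sum_univ_two]
          rw [add_comm]
          exact h)
        simpa using this 0
      refine ⟨fun _ => y, LinearIndependent.of_subsingleton 0 hy0, ?_⟩
      have : Function.update (fun _ : Fin 1 => y) i ((fun _ : Fin 1 => y) i + w)
          = fun _ : Fin 1 => y + w := by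
        funext k
        have : k = i := Subsingleton.elim _ _
        rw [this, Function.update_self]
      rw [this]
      exact LinearIndependent.of_subsingleton 0 hyw
    · -- m ≥ 2
      obtain ⟨m', rfl⟩ : ∃ m', m = m' + 1 := ⟨m - 1, by omega⟩
      obtain ⟨g, hg, hg0⟩ := exists_indep_head (F := F) (V := V) m' (by omega) w hw
      set t : Fin (m' + 1) := ⟨1, by omega⟩ with ht
      set σ : Equiv.Perm (Fin (m' + 1)) := Equiv.swap i t with hσ
      set k : Fin (m' + 1) := σ⁻¹ 0 with hk
      have hvk : (g ∘ σ) k = w := by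
        simp only [Function.comp_apply, hk, Equiv.Perm.inv_def, Equiv.apply_symm_apply]
        exact hg0
      have ht0 : t ≠ 0 := by
        intro h
        have : (1 : ℕ) = 0 := congrArg Fin.val h
        omega
      have hki : k ≠ i := by
        intro h
        have h1 : σ k = 0 := by rw [hk]; exact (Equiv.apply_symm_apply σ 0)
        have h2 : σ i = t := Equiv.swap_apply_left i t
        rw [h] at h1
        rw [h1] at h2
        exact ht0 h2.symm
      have hv : LinearIndependent F (g ∘ σ) := hg.comp σ σ.injective
      have hupd := indep_update hv i k hki
      rw [hvk] at hupd
      exact ⟨g ∘ σ, hv, hupd⟩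

end aux1

section aux2
variable {F : Type*} [Field F]

lemma sum_dotProduct'' {ι : Type*} (s : Finset ι) {p : ℕ} (f : ι → Fin p → F)
    (z : Fin p → F) : (∑ i ∈ s, f i) ⬝ᵥ z = ∑ i ∈ s, f i ⬝ᵥ z := by
  simp only [dotProduct, Finset.sum_apply, Finset.sum_mul]
  exact Finset.sum_comm

lemma row_add_dot {m p : ℕ} (A B : Matrix (Fin m) (Fin p) F) (i : Fin m) (z : Fin p → F) :
    (A + B) i ⬝ᵥ z = A i ⬝ᵥ z + B i ⬝ᵥ z := by
  have h : (A + B) i = A i + B i := rfl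
  rw [h, add_dotProduct]

theorem aux_main (F : Type*) [Field F] (m p : ℕ) (hm : 1 ≤ m) (hmp : m + 1 ≤ p) (hp : 3 ≤ p)
    (L : Matrix (Fin m) (Fin p) F →ₗ[F] Matrix (Fin 1) (Fin p) F)
    (b : Matrix (Fin 1) (Fin p) F)
    (hrk : ∀ N : Matrix (Fin m) (Fin p) F,
      (Matrix.of fun (i : Fin (m + 1)) (j : Fin p) =>
        if h : (i : ℕ) < m then N ⟨i, h⟩ j else (L N + b) 0 j).rank < m + 1) :
    ∃ Y : Fin m → F,
      ∀ (N : Matrix (Fin m) (Fin p) F) (j : Fin p),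
        (L N + b) 0 j = Matrix.vecMul Y N j := by
  classical
  -- Step A : for matrices with independent rows annihilating z, φ(M) ⬝ᵥ z = 0
  have stepA : ∀ (M : Matrix (Fin m) (Fin p) F) (z : Fin p → F),
      LinearIndependent F (fun k : Fin m => M k) → M.mulVec z = 0 →
      ((L M + b) 0) ⬝ᵥ z = 0 := by
    intro M z hM hMz
    by_contra hne
    set S : Matrix (Fin (m + 1)) (Fin p) F := Matrix.of fun i j =>
      if h : (i : ℕ) < m then M ⟨i, h⟩ j else (L M + b) 0 j with hS
    have hrowz : ∀ k : Fin m, M k ⬝ᵥ z = 0 := fun k => congrFun hMz k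
    have hrow : ∀ i : Fin m, S (Fin.castSucc i) = M i := by
      intro i; funext j
      simp only [hS, Matrix.of_apply, Fin.coe_castSucc, i.isLt, dif_pos, Fin.eta]
    have hlast : S (Fin.last m) = (L M + b) 0 := by
      funext j
      simp only [hS, Matrix.of_apply, Fin.val_last, lt_self_iff_false, dif_neg,
        not_false_iff]
    have hind : LinearIndependent F (fun i : Fin (m + 1) => S i) := by
      rw [Fintype.linearIndependent_iff]
      intro c hc
      have hdot : ∑ i : Fin (m + 1), (c i • S i) ⬝ᵥ z = 0 := by
        rw [← sum_dotProduct'', hc, zero_dotProduct]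
      rw [Fin.sum_univ_castSucc] at hdot
      have hterm : ∀ i : Fin m, (c (Fin.castSucc i) • S (Fin.castSucc i)) ⬝ᵥ z = 0 := by
        intro i
        rw [hrow, smul_dotProduct, hrowz, smul_zero]
      rw [Finset.sum_eq_zero (fun i _ => hterm i), zero_add, hlast,
        smul_dotProduct, smul_eq_mul] at hdot
      have hclast : c (Fin.last m) = 0 := by
        rcases mul_eq_zero.mp hdot with h | h
        · exact h
        · exact absurd h hne
      have hsum : ∑ i : Fin m, c (Fin.castSucc i) • M i = 0 := by
        rw [Fin.sum_univ_castSucc, hclast, zero_smul, add_zero] at hc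
        calc ∑ i : Fin m, c (Fin.castSucc i) • M i
            = ∑ i : Fin m, c (Fin.castSucc i) • S (Fin.castSucc i) := by
              refine Finset.sum_congr rfl fun i _ => ?_
              rw [hrow]
          _ = 0 := hc
      have hall := Fintype.linearIndependent_iff.mp hM _ hsum
      intro i
      exact Fin.lastCases hclast (fun i => hall i) i
    have hcard : S.rank = Fintype.card (Fin (m + 1)) := hind.rank_matrix
    have h2 := hrk M
    rw [← hS] at h2
    rw [hcard, Fintype.card_fin] at h2
    omega
  -- key lemma
  have key : ∀ (N : Matrix (Fin m) (Fin p) F) (z : Fin p → F),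
      N.mulVec z = 0 → ((L N + b) 0) ⬝ᵥ z = 0 := by
    intro N z hNz
    by_cases hz : z = 0
    · subst hz; exact dotProduct_zero _
    · set f : (Fin p → F) →ₗ[F] F :=
        { toFun := fun x => x ⬝ᵥ z
          map_add' := fun x y => add_dotProduct x y z
          map_smul' := fun cx x => smul_dotProduct cx x z } with hf
      have hker : ∀ x : Fin p → F, x ∈ LinearMap.ker f ↔ x ⬝ᵥ z = 0 := fun x =>
        LinearMap.mem_ker
      have hrange : finrank F (LinearMap.range f) = 1 := by
        obtain ⟨k, hk⟩ : ∃ k, z k ≠ 0 := by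
          by_contra h; push_neg at h; exact hz (funext h)
        apply le_antisymm
        · exact (Submodule.finrank_le _).trans_eq (finrank_self F)
        · rw [Nat.one_le_iff_ne_zero]
          intro h0
          have hbot : LinearMap.range f = ⊥ := Submodule.finrank_eq_zero.mp h0
          have : f (Pi.single k 1) = 0 := by
            have : f (Pi.single k 1) ∈ LinearMap.range f := LinearMap.mem_range_self f _
            rw [hbot] at this
            exact this
          rw [hf] at this
          simp only [LinearMap.coe_mk, AddHom.coe_mk] at this
          rw [single_dotProduct, one_mul] at this
          exact hk this
      have hKfr : finrank F (LinearMap.ker f) = p - 1 := by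
        have h := LinearMap.finrank_range_add_finrank_ker f
        rw [Module.finrank_fintype_fun_eq_card, Fintype.card_fin, hrange] at h
        omega
      have hKm : m ≤ finrank F (LinearMap.ker f) := by omega
      have hK2 : 2 ≤ finrank F (LinearMap.ker f) := by omega
      -- row matrices
      have hR : ∀ (i : Fin m) (w : Fin p → F), w ⬝ᵥ z = 0 →
          ((L (Matrix.of fun r j => if r = i then w j else 0)) 0) ⬝ᵥ z = 0 := by
        intro i w hw
        obtain ⟨v, hv, hv'⟩ := exists_fam (F := F) (V := LinearMap.ker f) hm hKm hK2 i
          ⟨w, (hker w).mpr hw⟩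
        set u := Function.update v i (v i + ⟨w, (hker w).mpr hw⟩) with hu
        set M : Matrix (Fin m) (Fin p) F := Matrix.of fun k j => (v k : Fin p → F) j with hM
        set M' : Matrix (Fin m) (Fin p) F := Matrix.of fun k j => (u k : Fin p → F) j with hM'
        have hMind : LinearIndependent F (fun k : Fin m => M k) :=
          hv.map' (LinearMap.ker f).subtype (Submodule.ker_subtype _)
        have hM'ind : LinearIndependent F (fun k : Fin m => M' k) :=
          hv'.map' (LinearMap.ker f).subtype (Submodule.ker_subtype _)
        have hMz : M.mulVec z = 0 := by
          funext k
          exact (hker _).mp (v k).2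
        have hM'z : M'.mulVec z = 0 := by
          funext k
          exact (hker _).mp (u k).2
        have hMM' : M' = M + Matrix.of fun r j => if r = i then w j else 0 := by
          funext r j
          show (u r : Fin p → F) j = (v r : Fin p → F) j + (if r = i then w j else 0)
          by_cases hr : r = i
          · subst hr
            rw [hu, Function.update_self, if_pos rfl]
            rfl
          · rw [hu, Function.update_of_ne hr, if_neg hr, add_zero]
        have e1 := stepA M z hMind hMz
        have e2 := stepA M' z hM'ind hM'z
        rw [hMM', map_add] at e2
        rw [row_add_dot] at e1 e2
        rw [row_add_dot] at e2
        linear_combination e2 - e1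
      -- decomposition
      have hdec : ∀ (M : Matrix (Fin m) (Fin p) F), M.mulVec z = 0 →
          ((L M) 0) ⬝ᵥ z = 0 := by
        intro M hMz
        have hMsum : M = ∑ i : Fin m,
            (Matrix.of fun r j => if r = i then M i j else 0) := by
          funext r j
          rw [Matrix.sum_apply]
          simp only [Matrix.of_apply]
          rw [Finset.sum_ite_eq]
          simp
        have : (L M) 0 ⬝ᵥ z
            = ∑ i : Fin m, ((L (Matrix.of fun r j => if r = i then M i j else 0)) 0) ⬝ᵥ z := by
          conv_lhs => rw [hMsum]
          rw [map_sum]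
          rw [show (∑ i : Fin m, L (Matrix.of fun r j => if r = i then M i j else 0)) 0
              = ∑ i : Fin m, (L (Matrix.of fun r j => if r = i then M i j else 0)) 0 from by
            exact Finset.sum_apply (0 : Fin 1) _ _]
          rw [sum_dotProduct'']
        rw [this]
        exact Finset.sum_eq_zero fun i _ => hR i (M i) (congrFun hMz i)
      have hb : b 0 ⬝ᵥ z = 0 := by
        obtain ⟨v, hv, -⟩ := exists_fam (F := F) (V := LinearMap.ker f) hm hKm hK2
          ⟨0, hm⟩ 0
        set M : Matrix (Fin m) (Fin p) F := Matrix.of fun k j => (v k : Fin p → F) j with hM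
        have hMind : LinearIndependent F (fun k : Fin m => M k) :=
          hv.map' (LinearMap.ker f).subtype (Submodule.ker_subtype _)
        have hMz : M.mulVec z = 0 := by
          funext k
          exact (hker _).mp (v k).2
        have e1 := stepA M z hMind hMz
        rw [row_add_dot, hdec M hMz, zero_add] at e1
        exact e1
      rw [row_add_dot, hdec N hNz, hb, add_zero]
  -- now conclude
  have hb0 : ∀ k : Fin p, b 0 k = 0 := by
    intro k
    have h := key 0 (Pi.single k 1) (by rw [Matrix.zero_mulVec])
    rw [map_zero, zero_add, dotProduct_single, mul_one] at h
    exact h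
  have hLE0 : ∀ (i : Fin m) (j k : Fin p), k ≠ j →
      (L (Matrix.single i j (1 : F))) 0 k = 0 := by
    intro i j k hkj
    have hmv : (Matrix.single i j (1 : F)).mulVec (Pi.single k 1) = 0 := by
      rw [Matrix.single_mulVec]
      rw [Pi.single_eq_of_ne (Ne.symm hkj), mul_zero]
      simp
    have h := key _ _ hmv
    rw [row_add_dot, dotProduct_single, dotProduct_single, mul_one,
      mul_one, hb0, add_zero] at h
    exact h
  have hLEc : ∀ (i : Fin m) (j j' : Fin p), j ≠ j' →
      (L (Matrix.single i j (1 : F))) 0 j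
        = (L (Matrix.single i j' (1 : F))) 0 j' := by
    intro i j j' hjj
    have hmv : (Matrix.single i j (1 : F) + Matrix.single i j' 1).mulVec
        (Pi.single j 1 - Pi.single j' 1) = 0 := by
      funext r
      simp only [Matrix.add_mulVec, Matrix.mulVec_sub, Matrix.mulVec_single_one, Matrix.col_apply,
        Pi.add_apply, Pi.sub_apply, Pi.zero_apply]
      simp only [Matrix.single, Matrix.of_apply, hjj, Ne.symm hjj, and_true,
        and_false, if_false]
      simp [hjj, Ne.symm hjj]
    have h := key _ _ hmv
    rw [map_add, row_add_dot, row_add_dot, dotProduct_sub, dotProduct_sub,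
      dotProduct_sub] at h
    simp only [dotProduct_single, mul_one] at h
    rw [hLE0 i j j' (Ne.symm hjj), hLE0 i j' j hjj, hb0, hb0] at h
    linear_combination h
  have hj0 : (0 : ℕ) < p := by omega
  set j0 : Fin p := ⟨0, hj0⟩
  refine ⟨fun i => (L (Matrix.single i j0 (1 : F))) 0 j0, ?_⟩
  intro N j
  have hYj : ∀ i, (L (Matrix.single i j (1 : F))) 0 j
      = (L (Matrix.single i j0 (1 : F))) 0 j0 := by
    intro i
    by_cases hj : j = j0
    · rw [hj]
    · exact hLEc i j j0 hj
  have hNsum : N = ∑ i : Fin m, ∑ jj : Fin p,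
      N i jj • Matrix.single i jj (1 : F) := by
    conv_lhs => rw [Matrix.matrix_eq_sum_single N]
    refine Finset.sum_congr rfl fun i _ => Finset.sum_congr rfl fun jj _ => ?_
    rw [Matrix.smul_single, smul_eq_mul, mul_one]
  have hLN : (L N) 0 j = ∑ i : Fin m, ∑ jj : Fin p,
      N i jj * (L (Matrix.single i jj (1 : F))) 0 j := by
    conv_lhs => rw [hNsum]
    simp only [map_sum, _root_.map_smul, Matrix.sum_apply, Matrix.smul_apply, smul_eq_mul]
  have hcol : ∀ i : Fin m, ∑ jj : Fin p,
      N i jj * (L (Matrix.single i jj (1 : F))) 0 j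
      = N i j * (L (Matrix.single i j (1 : F))) 0 j := by
    intro i
    refine Finset.sum_eq_single j (fun jj _ hne => ?_)
      (fun h => absurd (Finset.mem_univ _) h)
    rw [hLE0 i jj j (Ne.symm hne), mul_zero]
  have hadd : (L N + b) 0 j = (L N) 0 j + b 0 j := rfl
  rw [hadd, hb0, add_zero, hLN]
  rw [Finset.sum_congr rfl fun i _ => hcol i]
  have hvm : Matrix.vecMul (fun i => (L (Matrix.single i j0 (1 : F))) 0 j0) N j
      = ∑ i : Fin m, (L (Matrix.single i j0 (1 : F))) 0 j0 * N i j := by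
    simp [Matrix.vecMul, dotProduct]
  rw [hvm]
  refine Finset.sum_congr rfl fun i _ => ?_
  rw [hYj i, mul_comm]

end aux2

/-- Let `2 ≤ n ≤ p` with `p ≥ 3`, and let `φ : Mat_{n-1,p}(F) → Mat_{1,p}(F)` be an
affine map (written `N ↦ L(N) + b` with `L` linear and `b` constant) such that for every
`N`, appending the row `φ(N)` below `N` yields an `n×p` matrix of rank less than `n`.
Then `φ(N) = Yᵀ N` for some fixed `Y ∈ F^{n-1}`. -/
theorem affine_row_map_is_row_combination (F : Type*) [Field F]
    (n p : ℕ) (hn : 2 ≤ n) (hnp : n ≤ p) (hp : 3 ≤ p)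
    (L : Matrix (Fin (n - 1)) (Fin p) F →ₗ[F] Matrix (Fin 1) (Fin p) F)
    (b : Matrix (Fin 1) (Fin p) F)
    (hrk : ∀ N : Matrix (Fin (n - 1)) (Fin p) F,
      (Matrix.of fun (i : Fin n) (j : Fin p) =>
        if h : (i : ℕ) < n - 1 then N ⟨i, h⟩ j else (L N + b) 0 j).rank < n) :
    ∃ Y : Fin (n - 1) → F,
      ∀ (N : Matrix (Fin (n - 1)) (Fin p) F) (j : Fin p),
        (L N + b) 0 j = Matrix.vecMul Y N j := by
  obtain ⟨m, rfl⟩ : ∃ m, n = m + 1 := ⟨n - 1, by omega⟩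
  exact aux_main F m p (by omega) (by omega) hp L b hrk
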